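/- Let d = p^s be a prime power and M a submodule of (ℤ/dℤ)^{2n}. M is symplectic (i.e., M ∩ M^ω = {0}) if and only if M is nearly symplectic and M + M^ω = (ℤ/dℤ)^{2n}. In that case, M is a free submodule of even rank. -/

import Mathlib

/-- The standard symplectic form matrix `Jₙ`. -/
def Jmat (d n : ℕ) : Matrix (Fin (2 * n)) (Fin (2 * n)) (ZMod d) :=
  Matrix.of fun i j =>
    if i.val % 2 = 0 ∧ j.val = i.val + 1 then 1
    else if j.val % 2 = 0 ∧ i.val = j.val + 1 then -1 else 0

/-- The standard symplectic form `ω` on `(ℤ/dℤ)^{2n}`. -/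
def sympl (d n : ℕ) (x y : Fin (2 * n) → ZMod d) : ZMod d :=
  dotProduct x ((Jmat d n).mulVec y)

/-- The symplectic orthogonal `M^ω` of a submodule `M` of `(ℤ/dℤ)^{2n}`. -/
def symplOrth (d n : ℕ) (M : Submodule (ZMod d) (Fin (2 * n) → ZMod d)) :
    Submodule (ZMod d) (Fin (2 * n) → ZMod d) where
  carrier := {x | ∀ y ∈ M, sympl d n x y = 0}
  zero_mem' := by
    intro y hy
    simp [sympl, zero_dotProduct]
  add_mem' := by
    intro a b ha hb y hy
    simp only [sympl, add_dotProduct, Set.mem_setOf_eq] at *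
    rw [ha y hy, hb y hy, add_zero]
  smul_mem' := by
    intro c a ha y hy
    simp only [sympl, smul_dotProduct, Set.mem_setOf_eq] at *
    rw [ha y hy, smul_zero]

/-- `M` is nearly symplectic: there is a symplectic free basis `f` of `(ℤ/dℤ)^{2n}` and
a diagonal matrix `D` such that the columns of the basis matrix of `f` times `D`
generate `M`. -/
def NearlySymplectic (d n : ℕ) (M : Submodule (ZMod d) (Fin (2 * n) → ZMod d)) : Prop :=
  ∃ f : Module.Basis (Fin (2 * n)) (ZMod d) (Fin (2 * n) → ZMod d),
    (∀ i j, sympl d n (f i) (f j) = Jmat d n i j) ∧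
    ∃ D : Fin (2 * n) → ZMod d,
      Submodule.span (ZMod d) (Set.range fun i => D i • f i) = M

section Lemmas
variable {d n : ℕ}

lemma sympl_add_left (x x' y : Fin (2*n) → ZMod d) :
    sympl d n (x + x') y = sympl d n x y + sympl d n x' y := by
  simp [sympl, add_dotProduct]

lemma sympl_smul_left (c : ZMod d) (x y : Fin (2*n) → ZMod d) :
    sympl d n (c • x) y = c * sympl d n x y := by
  simp [sympl, smul_dotProduct, smul_eq_mul]

lemma sympl_add_right (x y y' : Fin (2*n) → ZMod d) :
    sympl d n x (y + y') = sympl d n x y + sympl d n x y' := by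
  simp [sympl, Matrix.mulVec_add, dotProduct_add]

lemma sympl_smul_right (c : ZMod d) (x y : Fin (2*n) → ZMod d) :
    sympl d n x (c • y) = c * sympl d n x y := by
  simp [sympl, Matrix.mulVec_smul, dotProduct_smul, smul_eq_mul]

lemma sympl_zero_left (y : Fin (2*n) → ZMod d) : sympl d n 0 y = 0 := by
  simp [sympl]

lemma sympl_zero_right (x : Fin (2*n) → ZMod d) : sympl d n x 0 = 0 := by
  simp [sympl]

def symplR (d n : ℕ) (x : Fin (2*n) → ZMod d) :
    (Fin (2*n) → ZMod d) →ₗ[ZMod d] ZMod d where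
  toFun y := sympl d n x y
  map_add' := sympl_add_right x
  map_smul' c y := sympl_smul_right c x y

@[simp] lemma symplR_apply (x y : Fin (2*n) → ZMod d) : symplR d n x y = sympl d n x y := rfl

lemma sympl_sub_right (x y y' : Fin (2*n) → ZMod d) :
    sympl d n x (y - y') = sympl d n x y - sympl d n x y' :=
  map_sub (symplR d n x) y y'

lemma Jmat_transpose : (Jmat d n).transpose = - Jmat d n := by
  ext i j
  simp only [Matrix.transpose_apply, Matrix.neg_apply, Jmat, Matrix.of_apply]
  split_ifs <;> first | (exfalso; omega) | ring

lemma sympl_antisymm (x y : Fin (2*n) → ZMod d) :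
    sympl d n x y = - sympl d n y x := by
  rw [sympl, Matrix.dotProduct_mulVec, dotProduct_comm, ← Matrix.mulVec_transpose,
    Jmat_transpose, sympl, Matrix.neg_mulVec, dotProduct_neg]

def Umat (d n : ℕ) : Matrix (Fin (2 * n)) (Fin (2 * n)) (ZMod d) :=
  Matrix.of fun i j => if i.val % 2 = 0 ∧ j.val = i.val + 1 then 1 else 0

lemma Jmat_eq_U : Jmat d n = Umat d n - (Umat d n).transpose := by
  ext i j
  simp only [Jmat, Umat, Matrix.sub_apply, Matrix.transpose_apply, Matrix.of_apply]
  split_ifs <;> first | (exfalso; omega) | ring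

lemma sympl_self (x : Fin (2*n) → ZMod d) : sympl d n x x = 0 := by
  rw [sympl, Jmat_eq_U, Matrix.sub_mulVec, dotProduct_sub,
    Matrix.mulVec_transpose, dotProduct_comm x (Matrix.vecMul x (Umat d n)),
    ← Matrix.dotProduct_mulVec, sub_self]

def prn (k : ℕ) : ℕ := if k % 2 = 0 then k + 1 else k - 1

def pr (i : Fin (2*n)) : Fin (2*n) :=
  ⟨prn i.val, by have := i.isLt; unfold prn; split_ifs <;> omega⟩

@[simp] lemma pr_pr (i : Fin (2*n)) : pr (pr i) = i := by
  have := i.isLt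
  apply Fin.ext
  show prn (prn i.val) = i.val
  unfold prn
  split_ifs <;> omega

@[simp] lemma pr_val (i : Fin (2*n)) : (pr i).val = prn i.val := rfl

lemma Jmat_eq_zero (i j : Fin (2*n)) (h : i ≠ pr j) : Jmat d n i j = 0 := by
  have hv : i.val ≠ prn j.val := fun hc => h (Fin.ext hc)
  have := i.isLt; have := j.isLt
  unfold prn at hv
  simp only [Jmat, Matrix.of_apply]
  split_ifs at hv ⊢ <;> first | rfl | (exfalso; omega)

lemma Jmat_pr_sq (j : Fin (2*n)) : Jmat d n (pr j) j * Jmat d n (pr j) j = 1 := by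
  have := j.isLt
  simp only [Jmat, Matrix.of_apply, pr_val, prn]
  split_ifs <;> first | (exfalso; omega) | ring

lemma sympl_single (z : Fin (2*n) → ZMod d) (m : Fin (2*n)) :
    sympl d n z (Pi.single m 1) = z (pr m) * Jmat d n (pr m) m := by
  rw [sympl]
  have hmv : (Jmat d n).mulVec (Pi.single m 1) = fun i => Jmat d n i m := by
    funext i
    rw [Matrix.mulVec_single]
    simp
  rw [hmv, dotProduct]
  rw [Finset.sum_eq_single (pr m)]
  · intro b _ hb
    rw [Jmat_eq_zero b m hb, mul_zero]
  · intro h; exact absurd (Finset.mem_univ _) h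

lemma sympl_nondegenerate (z : Fin (2*n) → ZMod d) (h : ∀ y, sympl d n z y = 0) : z = 0 := by
  funext k
  have h1 := h (Pi.single (pr k) 1)
  rw [sympl_single, pr_pr] at h1
  have h2 : z k * (Jmat d n k (pr k) * Jmat d n k (pr k)) = 0 := by
    rw [← mul_assoc, h1, zero_mul]
  have h3 := Jmat_pr_sq (n := n) (d := d) (pr k)
  rw [pr_pr] at h3
  rw [h3, mul_one] at h2
  exact h2

lemma mem_symplOrth {M : Submodule (ZMod d) (Fin (2*n) → ZMod d)} {x : Fin (2*n) → ZMod d} :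
    x ∈ symplOrth d n M ↔ ∀ y ∈ M, sympl d n x y = 0 := Iff.rfl

lemma mem_symplOrth_ker {M : Submodule (ZMod d) (Fin (2*n) → ZMod d)} {x : Fin (2*n) → ZMod d} :
    x ∈ symplOrth d n M ↔ M ≤ LinearMap.ker (symplR d n x) := by
  constructor
  · intro h y hy
    simpa [LinearMap.mem_ker] using h y hy
  · intro h y hy
    simpa [LinearMap.mem_ker] using h hy

end Lemmas

section ZModLemmas
variable {p s : ℕ}

lemma zmod_nonunit (hp : p.Prime) (c : ZMod (p^s)) (h : ¬ IsUnit c) :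
    ∃ c', c = (p : ZMod (p^s)) * c' := by
  haveI : NeZero (p^s) := ⟨pow_ne_zero s hp.pos.ne'⟩
  by_cases hd : p ∣ c.val
  · obtain ⟨t, ht⟩ := hd
    exact ⟨(t : ZMod (p^s)), by rw [← ZMod.natCast_zmod_val c, ht]; push_cast; ring⟩
  · exfalso
    apply h
    rw [← ZMod.natCast_zmod_val c, ZMod.isUnit_iff_coprime]
    exact ((Nat.Prime.coprime_iff_not_dvd hp).mpr hd).pow_left s |>.symm

lemma zmod_pow_zero_div (hp : p.Prime) (a : ℕ) (ha : a ≤ s) (c : ZMod (p^s))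
    (h : (p : ZMod (p^s))^(s-a) * c = 0) : ∃ c', c = (p : ZMod (p^s))^a * c' := by
  haveI : NeZero (p^s) := ⟨pow_ne_zero s hp.pos.ne'⟩
  have h2 : ((p^(s-a) * c.val : ℕ) : ZMod (p^s)) = 0 := by
    push_cast
    rw [ZMod.natCast_zmod_val c]
    exact h
  rw [ZMod.natCast_eq_zero_iff] at h2
  have h3 : p^a ∣ c.val := by
    obtain ⟨t, ht⟩ := h2
    refine ⟨t, Nat.eq_of_mul_eq_mul_left (pow_pos hp.pos (s-a)) ?_⟩
    rw [ht, ← mul_assoc, ← pow_add]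
    congr 2
    omega
  obtain ⟨t, ht⟩ := h3
  exact ⟨(t : ZMod (p^s)), by rw [← ZMod.natCast_zmod_val c, ht]; push_cast; ring⟩

lemma zmod_p_pow_s : ((p : ZMod (p^s)))^s = 0 := by
  have : (((p^s : ℕ)) : ZMod (p^s)) = 0 := ZMod.natCast_self _
  push_cast at this
  exact this

end ZModLemmas

section Main
variable {p s n : ℕ}

lemma exists_unit_pair (hp : p.Prime) (hs : 1 ≤ s)
    (M : Submodule (ZMod (p^s)) (Fin (2*n) → ZMod (p^s)))
    (hM : M ⊓ symplOrth (p^s) n M = ⊥) (hne : M ≠ ⊥) :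
    ∃ x ∈ M, ∃ y ∈ M, IsUnit (sympl (p^s) n x y) := by
  by_contra hcon
  push_neg at hcon
  -- every element of M is divisible by p^k for all k ≤ s
  have claim : ∀ k, k ≤ s → ∀ x ∈ M, ∃ x', x = (p : ZMod (p^s))^k • x' := by
    intro k
    induction k with
    | zero => intro _ x _; exact ⟨x, by simp⟩
    | succ k ih =>
      intro hk x hx
      have ihk := ih (by omega)
      -- z := p^(s-1-k) • x is in M ∩ M^ω
      set z : Fin (2*n) → ZMod (p^s) := (p : ZMod (p^s))^(s-1-k) • x with hz
      have hzM : z ∈ M := Submodule.smul_mem M _ hx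
      have hzO : z ∈ symplOrth (p^s) n M := by
        intro y hy
        rw [hz, sympl_smul_left]
        rcases Nat.eq_zero_or_pos k with hk0 | hkpos
        · subst hk0
          obtain ⟨c, hc⟩ := zmod_nonunit hp _ (hcon x hx y hy)
          rw [hc]
          simp only [Nat.sub_zero]
          rw [← mul_assoc, ← pow_succ]
          have : s - 1 + 1 = s := by omega
          rw [this, zmod_p_pow_s, zero_mul]
        · obtain ⟨x', hx'⟩ := ihk x hx
          obtain ⟨y', hy'⟩ := ihk y hy
          rw [hx', hy', sympl_smul_left, sympl_smul_right]
          rw [← mul_assoc, ← mul_assoc, ← pow_add, ← pow_add]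
          have h0 : (p : ZMod (p^s))^(s - 1 - k + k + k) = 0 := by
            have : s - 1 - k + k + k = s + (k - 1) := by omega
            rw [this, pow_add, zmod_p_pow_s, zero_mul]
          rw [h0, zero_mul]
      have hz0 : z = 0 := by
        have : z ∈ M ⊓ symplOrth (p^s) n M := ⟨hzM, hzO⟩
        rw [hM] at this
        exact this
      -- conclude each coordinate of x is divisible by p^(k+1)
      have hcoord : ∀ i, ∃ c, x i = (p : ZMod (p^s))^(k+1) * c := by
        intro i
        apply zmod_pow_zero_div hp (k+1) hk
        have := congrFun hz0 i
        rw [hz] at this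
        simpa [Pi.smul_apply, smul_eq_mul, show s - (k+1) = s - 1 - k by omega] using this
      choose c hc using hcoord
      exact ⟨c, by funext i; rw [hc i]; simp [smul_eq_mul]⟩
  -- hence M = ⊥
  apply hne
  rw [Submodule.eq_bot_iff]
  intro x hx
  obtain ⟨x', hx'⟩ := claim s le_rfl x hx
  rw [hx', zmod_p_pow_s, zero_smul]

end Main

section System
variable {p s n : ℕ}

lemma exists_system (hp : p.Prime) (hs : 1 ≤ s) :
    ∀ (k : ℕ) (M : Submodule (ZMod (p^s)) (Fin (2*n) → ZMod (p^s))),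
    Nat.card M ≤ k → M ⊓ symplOrth (p^s) n M = ⊥ →
    ∃ (r : ℕ) (x y : Fin r → (Fin (2*n) → ZMod (p^s))),
      (∀ i, x i ∈ M) ∧ (∀ i, y i ∈ M) ∧
      (∀ i j, sympl (p^s) n (x i) (x j) = 0) ∧
      (∀ i j, sympl (p^s) n (y i) (y j) = 0) ∧
      (∀ i j, sympl (p^s) n (x i) (y j) = if i = j then 1 else 0) ∧
      Submodule.span (ZMod (p^s)) (Set.range x ∪ Set.range y) = M := by
  haveI : NeZero (p^s) := ⟨pow_ne_zero s hp.pos.ne'⟩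
  haveI : Fact (1 < p^s) := ⟨by
    calc 1 < p := hp.one_lt
    _ ≤ p^s := Nat.le_self_pow (by omega) p⟩
  intro k
  induction k with
  | zero =>
    intro M hcard _
    exfalso
    have : 0 < Nat.card M := Nat.card_pos
    omega
  | succ k ih =>
    intro M hcard hM
    by_cases hbot : M = ⊥
    · refine ⟨0, Fin.elim0, Fin.elim0, fun i => i.elim0, fun i => i.elim0,
        fun i => i.elim0, fun i => i.elim0, fun i => i.elim0, ?_⟩
      simp [hbot]
    · obtain ⟨x₀, hx₀M, y₀, hy₀M, hu⟩ := exists_unit_pair hp hs M hM hbot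
      obtain ⟨y₂, hy₂def⟩ : ∃ y₂, y₂ = (↑hu.unit⁻¹ : ZMod (p^s)) • y₀ := ⟨_, rfl⟩
      have hy₂M : y₂ ∈ M := by rw [hy₂def]; exact Submodule.smul_mem M _ hy₀M
      have hxy : sympl (p^s) n x₀ y₂ = 1 := by
        rw [hy₂def, sympl_smul_right]
        exact hu.val_inv_mul
      have hyx : sympl (p^s) n y₂ x₀ = -1 := by
        rw [sympl_antisymm, hxy]
      obtain ⟨M', hM'def⟩ : ∃ M' : Submodule (ZMod (p^s)) (Fin (2*n) → ZMod (p^s)),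
        M' = M ⊓ LinearMap.ker (symplR (p^s) n x₀) ⊓ LinearMap.ker (symplR (p^s) n y₂) := ⟨_, rfl⟩
      have hM'le : M' ≤ M := fun v hv => by rw [hM'def] at hv; exact hv.1.1
      have hM'x : ∀ v ∈ M', sympl (p^s) n x₀ v = 0 := fun v hv => by
        rw [hM'def] at hv; exact hv.1.2
      have hM'y : ∀ v ∈ M', sympl (p^s) n y₂ v = 0 := fun v hv => by
        rw [hM'def] at hv; exact hv.2
      -- the projection decomposition
      have hdec : ∀ m ∈ M,
          m - (sympl (p^s) n m y₂ • x₀ + sympl (p^s) n x₀ m • y₂) ∈ M' := by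
        intro m hm
        rw [hM'def]
        refine ⟨⟨Submodule.sub_mem M hm (Submodule.add_mem M
          (Submodule.smul_mem M _ hx₀M) (Submodule.smul_mem M _ hy₂M)), ?_⟩, ?_⟩
        · show sympl (p^s) n x₀ (m - (sympl (p^s) n m y₂ • x₀ + sympl (p^s) n x₀ m • y₂)) = 0
          rw [sympl_sub_right, sympl_add_right, sympl_smul_right, sympl_smul_right,
            sympl_self, hxy]
          ring
        · show sympl (p^s) n y₂ (m - (sympl (p^s) n m y₂ • x₀ + sympl (p^s) n x₀ m • y₂)) = 0
          rw [sympl_sub_right, sympl_add_right, sympl_smul_right, sympl_smul_right,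
            sympl_self, hyx, sympl_antisymm y₂ m]
          ring
      have hM'perp : M' ⊓ symplOrth (p^s) n M' = ⊥ := by
        rw [Submodule.eq_bot_iff]
        rintro z ⟨hzM', hzO⟩
        have hzM : z ∈ M := hM'le hzM'
        have hzOM : z ∈ symplOrth (p^s) n M := by
          intro m hm
          have h1 : sympl (p^s) n z (m - (sympl (p^s) n m y₂ • x₀ +
              sympl (p^s) n x₀ m • y₂)) = 0 := hzO _ (hdec m hm)
          rw [sympl_sub_right, sympl_add_right, sympl_smul_right, sympl_smul_right] at h1
          have h2 : sympl (p^s) n z x₀ = 0 := by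
            rw [sympl_antisymm, hM'x z hzM', neg_zero]
          have h3 : sympl (p^s) n z y₂ = 0 := by
            rw [sympl_antisymm, hM'y z hzM', neg_zero]
          rw [h2, h3, mul_zero, mul_zero, add_zero, sub_zero] at h1
          exact h1
        have : z ∈ M ⊓ symplOrth (p^s) n M := ⟨hzM, hzOM⟩
        rw [hM] at this
        exact this
      have hx₀notM' : x₀ ∉ M' := by
        intro hc
        have := hM'y x₀ hc
        rw [hyx] at this
        exact (neg_ne_zero.mpr (one_ne_zero)) this
      have hlt : M' < M := lt_of_le_of_ne hM'le (fun h => hx₀notM' (h ▸ hx₀M))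
      have hcard' : Nat.card M' ≤ k := by
        have h1 : Nat.card M' < Nat.card M :=
          Set.ncard_lt_ncard (SetLike.coe_ssubset_coe.mpr hlt) (Set.toFinite _)
        omega
      obtain ⟨r, xs, ys, hxsM, hysM, hxx, hyy, hxy', hspan⟩ := ih M' hcard' hM'perp
      refine ⟨r + 1, Fin.cons x₀ xs, Fin.cons y₂ ys, ?_, ?_, ?_, ?_, ?_, ?_⟩
      · intro i
        refine Fin.cases ?_ ?_ i
        · simpa using hx₀M
        · intro j; simpa using hM'le (hxsM j)
      · intro i
        refine Fin.cases ?_ ?_ i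
        · simpa using hy₂M
        · intro j; simpa using hM'le (hysM j)
      · intro i j
        refine Fin.cases ?_ ?_ i <;> [skip; intro i'] <;>
          refine Fin.cases ?_ ?_ j <;> [skip; intro j'; skip; intro j'] <;>
          simp only [Fin.cons_zero, Fin.cons_succ]
        · exact sympl_self x₀
        · exact hM'x _ (hxsM j')
        · rw [sympl_antisymm, hM'x _ (hxsM i'), neg_zero]
        · exact hxx i' j'
      · intro i j
        refine Fin.cases ?_ ?_ i <;> [skip; intro i'] <;>
          refine Fin.cases ?_ ?_ j <;> [skip; intro j'; skip; intro j'] <;>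
          simp only [Fin.cons_zero, Fin.cons_succ]
        · exact sympl_self y₂
        · exact hM'y _ (hysM j')
        · rw [sympl_antisymm, hM'y _ (hysM i'), neg_zero]
        · exact hyy i' j'
      · intro i j
        refine Fin.cases ?_ ?_ i <;> [skip; intro i'] <;>
          refine Fin.cases ?_ ?_ j <;> [skip; intro j'; skip; intro j'] <;>
          simp only [Fin.cons_zero, Fin.cons_succ]
        · simp [hxy]
        · rw [hM'x _ (hysM j')]
          simp [(Fin.succ_ne_zero j').symm]
        · rw [sympl_antisymm, hM'y _ (hxsM i'), neg_zero]
          simp [Fin.succ_ne_zero i']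
        · rw [hxy' i' j']
          simp [Fin.succ_inj]
      · apply le_antisymm
        · rw [Submodule.span_le]
          rintro v (⟨i, rfl⟩ | ⟨i, rfl⟩)
          · refine Fin.cases ?_ ?_ i
            · simpa using hx₀M
            · intro j; simpa using hM'le (hxsM j)
          · refine Fin.cases ?_ ?_ i
            · simpa using hy₂M
            · intro j; simpa using hM'le (hysM j)
        · intro m hm
          have hx₀mem : x₀ ∈ Submodule.span (ZMod (p^s))
              (Set.range (Fin.cons x₀ xs) ∪ Set.range (Fin.cons y₂ ys)) :=
            Submodule.subset_span (Or.inl ⟨0, Fin.cons_zero _ _⟩)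
          have hy₂mem : y₂ ∈ Submodule.span (ZMod (p^s))
              (Set.range (Fin.cons x₀ xs) ∪ Set.range (Fin.cons y₂ ys)) :=
            Submodule.subset_span (Or.inr ⟨0, Fin.cons_zero _ _⟩)
          have hsub : M' ≤ Submodule.span (ZMod (p^s))
              (Set.range (Fin.cons x₀ xs) ∪ Set.range (Fin.cons y₂ ys)) := by
            rw [← hspan]
            apply Submodule.span_mono
            rintro v (⟨i, rfl⟩ | ⟨i, rfl⟩)
            · exact Or.inl ⟨i.succ, (Fin.cons_succ _ _ _).symm ▸ rfl⟩
            · exact Or.inr ⟨i.succ, (Fin.cons_succ _ _ _).symm ▸ rfl⟩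
          have hdm := hsub (hdec m hm)
          have : m = (m - (sympl (p^s) n m y₂ • x₀ + sympl (p^s) n x₀ m • y₂)) +
              (sympl (p^s) n m y₂ • x₀ + sympl (p^s) n x₀ m • y₂) := by ring
          rw [this]
          exact Submodule.add_mem _ hdm (Submodule.add_mem _
            (Submodule.smul_mem _ _ hx₀mem) (Submodule.smul_mem _ _ hy₂mem))
end System

section Assembly
variable {d n : ℕ}

def symplL (d n : ℕ) (y : Fin (2*n) → ZMod d) :
    (Fin (2*n) → ZMod d) →ₗ[ZMod d] ZMod d where
  toFun x := sympl d n x y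
  map_add' a b := sympl_add_left a b y
  map_smul' c a := sympl_smul_left c a y

@[simp] lemma symplL_apply (x y : Fin (2*n) → ZMod d) : symplL d n y x = sympl d n x y := rfl

lemma sympl_sub_left (x x' y : Fin (2*n) → ZMod d) :
    sympl d n (x - x') y = sympl d n x y - sympl d n x' y :=
  map_sub (symplL d n y) x x'

lemma sympl_sum_left {r : ℕ} (f : Fin r → (Fin (2*n) → ZMod d)) (y : Fin (2*n) → ZMod d) :
    sympl d n (∑ i, f i) y = ∑ i, sympl d n (f i) y :=
  map_sum (symplL d n y) f Finset.univ

lemma sympl_sum_right {r : ℕ} (x : Fin (2*n) → ZMod d) (f : Fin r → (Fin (2*n) → ZMod d)) :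
    sympl d n x (∑ i, f i) = ∑ i, sympl d n x (f i) :=
  map_sum (symplR d n x) f Finset.univ

/-- interleave two tuples -/
def ilv {r : ℕ} (x y : Fin r → (Fin (2*n) → ZMod d)) : Fin (2*r) → (Fin (2*n) → ZMod d) :=
  fun k => if h : k.val % 2 = 0 then x ⟨k.val/2, by have := k.isLt; omega⟩
    else y ⟨k.val/2, by have := k.isLt; omega⟩

lemma ilv_even {r : ℕ} (x y : Fin r → (Fin (2*n) → ZMod d)) (k : Fin (2*r))
    (hk : k.val % 2 = 0) : ilv x y k = x ⟨k.val/2, by have := k.isLt; omega⟩ := by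
  simp [ilv, hk]

lemma ilv_odd {r : ℕ} (x y : Fin r → (Fin (2*n) → ZMod d)) (k : Fin (2*r))
    (hk : k.val % 2 = 1) : ilv x y k = y ⟨k.val/2, by have := k.isLt; omega⟩ := by
  simp [ilv, hk]

lemma ilv_range {r : ℕ} (x y : Fin r → (Fin (2*n) → ZMod d)) :
    Set.range (ilv x y) = Set.range x ∪ Set.range y := by
  apply Set.eq_of_subset_of_subset
  · rintro v ⟨k, rfl⟩
    rcases Nat.mod_two_eq_zero_or_one k.val with h | h
    · rw [ilv_even x y k h]; exact Or.inl ⟨_, rfl⟩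
    · rw [ilv_odd x y k h]; exact Or.inr ⟨_, rfl⟩
  · rintro v (⟨i, rfl⟩ | ⟨i, rfl⟩)
    · refine ⟨⟨2*i.val, by have := i.isLt; omega⟩, ?_⟩
      rw [ilv_even x y _ (show (2*i.val) % 2 = 0 by omega)]
      exact congrArg x (Fin.ext (show 2*i.val/2 = i.val by omega))
    · refine ⟨⟨2*i.val+1, by have := i.isLt; omega⟩, ?_⟩
      rw [ilv_odd x y _ (show (2*i.val+1) % 2 = 1 by omega)]
      exact congrArg y (Fin.ext (show (2*i.val+1)/2 = i.val by omega))

end Assembly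

section SystemProps
variable {d n : ℕ}

def Jpat (d : ℕ) (a b : ℕ) : ZMod d :=
  if a % 2 = 0 ∧ b = a + 1 then 1 else if b % 2 = 0 ∧ a = b + 1 then -1 else 0

lemma Jmat_eq_Jpat (i j : Fin (2*n)) : Jmat d n i j = Jpat d i.val j.val := rfl

structure IsSystem (d n r : ℕ) (M : Submodule (ZMod d) (Fin (2*n) → ZMod d))
    (x y : Fin r → (Fin (2*n) → ZMod d)) : Prop where
  hxM : ∀ i, x i ∈ M
  hyM : ∀ i, y i ∈ M
  hxx : ∀ i j, sympl d n (x i) (x j) = 0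
  hyy : ∀ i j, sympl d n (y i) (y j) = 0
  hxy : ∀ i j, sympl d n (x i) (y j) = if i = j then 1 else 0
  hspan : Submodule.span (ZMod d) (Set.range x ∪ Set.range y) = M

namespace IsSystem

variable {r : ℕ} {M : Submodule (ZMod d) (Fin (2*n) → ZMod d)}
  {x y : Fin r → (Fin (2*n) → ZMod d)}

lemma hyx (hS : IsSystem d n r M x y) : ∀ i j, sympl d n (y i) (x j) = -(if j = i then 1 else 0) := by
  intro i j
  rw [sympl_antisymm, hS.hxy]

lemma ilv_mem (hS : IsSystem d n r M x y) : ∀ k, ilv x y k ∈ M := by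
  intro k
  rcases Nat.mod_two_eq_zero_or_one k.val with h | h
  · rw [ilv_even x y k h]; exact hS.hxM _
  · rw [ilv_odd x y k h]; exact hS.hyM _

lemma sympl_ilv (hS : IsSystem d n r M x y) : ∀ k l, sympl d n (ilv x y k) (ilv x y l) = Jpat d k.val l.val := by
  intro k l
  rcases Nat.mod_two_eq_zero_or_one k.val with hk | hk <;>
    rcases Nat.mod_two_eq_zero_or_one l.val with hl | hl
  · rw [ilv_even x y k hk, ilv_even x y l hl, hS.hxx]
    rw [Jpat, if_neg (by omega), if_neg (by omega)]
  · rw [ilv_even x y k hk, ilv_odd x y l hl, hS.hxy]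
    by_cases h : k.val / 2 = l.val / 2
    · rw [if_pos (Fin.ext h), Jpat, if_pos ⟨hk, by omega⟩]
    · rw [if_neg (fun hc => h (congrArg Fin.val hc)), Jpat,
        if_neg (by intro hc; exact h (by omega)), if_neg (by omega)]
  · rw [ilv_odd x y k hk, ilv_even x y l hl, hS.hyx]
    by_cases h : l.val / 2 = k.val / 2
    · rw [if_pos (Fin.ext h), Jpat, if_neg (by omega), if_pos ⟨hl, by omega⟩]
    · rw [if_neg (fun hc => h (congrArg Fin.val hc)), Jpat, if_neg (by omega),
        if_neg (by intro hc; exact h (by omega))]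
      ring
  · rw [ilv_odd x y k hk, ilv_odd x y l hl, hS.hyy]
    rw [Jpat, if_neg (by omega), if_neg (by omega)]

lemma ilv_span (hS : IsSystem d n r M x y) : Submodule.span (ZMod d) (Set.range (ilv x y)) = M := by
  rw [ilv_range, hS.hspan]

lemma ilv_li (hS : IsSystem d n r M x y) : LinearIndependent (ZMod d) (ilv x y) := by
  rw [Fintype.linearIndependent_iff]
  intro g hg k
  rcases Nat.mod_two_eq_zero_or_one k.val with hk | hk
  · -- pair with y (k/2)
    have h0 : sympl d n (∑ i, g i • ilv x y i) (y ⟨k.val/2, by have := k.isLt; omega⟩) = 0 := by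
      rw [hg, sympl_zero_left]
    rw [sympl_sum_left] at h0
    have hterm : ∀ l : Fin (2*r), l ≠ k →
        sympl d n (g l • ilv x y l) (y ⟨k.val/2, by have := k.isLt; omega⟩) = 0 := by
      intro l hl
      rw [sympl_smul_left]
      rcases Nat.mod_two_eq_zero_or_one l.val with hl2 | hl2
      · rw [ilv_even x y l hl2, hS.hxy, if_neg, mul_zero]
        intro hc
        have : l.val / 2 = k.val / 2 := congrArg Fin.val hc
        exact hl (Fin.ext (by omega))
      · rw [ilv_odd x y l hl2, hS.hyy, mul_zero]
    rw [Finset.sum_eq_single k (fun l _ hl => hterm l hl)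
      (fun hc => absurd (Finset.mem_univ _) hc)] at h0
    rw [sympl_smul_left, ilv_even x y k hk, hS.hxy, if_pos rfl, mul_one] at h0
    exact h0
  · -- pair with x (k/2)
    have h0 : sympl d n (∑ i, g i • ilv x y i) (x ⟨k.val/2, by have := k.isLt; omega⟩) = 0 := by
      rw [hg, sympl_zero_left]
    rw [sympl_sum_left] at h0
    have hterm : ∀ l : Fin (2*r), l ≠ k →
        sympl d n (g l • ilv x y l) (x ⟨k.val/2, by have := k.isLt; omega⟩) = 0 := by
      intro l hl
      rw [sympl_smul_left]
      rcases Nat.mod_two_eq_zero_or_one l.val with hl2 | hl2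
      · rw [ilv_even x y l hl2, hS.hxx, mul_zero]
      · rw [ilv_odd x y l hl2, hS.hyx, if_neg, neg_zero, mul_zero]
        intro hc
        have : k.val / 2 = l.val / 2 := congrArg Fin.val hc
        exact hl (Fin.ext (by omega))
    rw [Finset.sum_eq_single k (fun l _ hl => hterm l hl)
      (fun hc => absurd (Finset.mem_univ _) hc)] at h0
    rw [sympl_smul_left, ilv_odd x y k hk, hS.hyx, if_pos rfl] at h0
    have : -(g k) = 0 := by rw [← h0]; ring
    simpa using this

lemma sup_top (hS : IsSystem d n r M x y) : M ⊔ symplOrth d n M = ⊤ := by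
  rw [eq_top_iff]
  intro v _
  have hmem : (∑ i, sympl d n v (y i) • x i) + (∑ i, sympl d n (x i) v • y i) ∈ M :=
    Submodule.add_mem M
      (Submodule.sum_mem M (fun i _ => Submodule.smul_mem M _ (hS.hxM i)))
      (Submodule.sum_mem M (fun i _ => Submodule.smul_mem M _ (hS.hyM i)))
  have hw : v - ((∑ i, sympl d n v (y i) • x i) + (∑ i, sympl d n (x i) v • y i)) ∈
      symplOrth d n M := by
    rw [mem_symplOrth_ker, ← hS.hspan, Submodule.span_le]
    rintro w (⟨j, rfl⟩ | ⟨j, rfl⟩) <;>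
      simp only [SetLike.mem_coe, LinearMap.mem_ker, symplR_apply] <;>
      rw [sympl_sub_left, sympl_add_left, sympl_sum_left, sympl_sum_left]
    · have e1 : ∀ i, sympl d n (sympl d n v (y i) • x i) (x j) = 0 := by
        intro i; rw [sympl_smul_left, hS.hxx, mul_zero]
      have e2 : ∀ i, sympl d n (sympl d n (x i) v • y i) (x j) =
          -(if j = i then 1 else 0) * sympl d n (x i) v := by
        intro i; rw [sympl_smul_left, hS.hyx]; ring
      simp only [e1, e2, Finset.sum_const_zero]
      rw [Finset.sum_eq_single j (by intro l _ hl; rw [if_neg (Ne.symm hl)]; ring)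
        (fun hc => absurd (Finset.mem_univ _) hc), if_pos rfl]
      rw [sympl_antisymm v (x j)]
      ring
    · have e1 : ∀ i, sympl d n (sympl d n v (y i) • x i) (y j) =
          (if i = j then 1 else 0) * sympl d n v (y i) := by
        intro i; rw [sympl_smul_left, hS.hxy]; ring
      have e2 : ∀ i, sympl d n (sympl d n (x i) v • y i) (y j) = 0 := by
        intro i; rw [sympl_smul_left, hS.hyy, mul_zero]
      simp only [e1, e2, Finset.sum_const_zero]
      rw [Finset.sum_eq_single j (by intro l _ hl; rw [if_neg hl]; ring)
        (fun hc => absurd (Finset.mem_univ _) hc), if_pos rfl]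
      ring
  have : v = ((∑ i, sympl d n v (y i) • x i) + (∑ i, sympl d n (x i) v • y i)) +
      (v - ((∑ i, sympl d n v (y i) • x i) + (∑ i, sympl d n (x i) v • y i))) := by ring
  rw [this]
  exact Submodule.add_mem _ (Submodule.mem_sup_left hmem) (Submodule.mem_sup_right hw)

end IsSystem
end SystemProps

section Append
variable {d n : ℕ}

lemma append_range {α : Type*} {m k : ℕ} (u : Fin m → α) (v : Fin k → α) :
    Set.range (Fin.append u v) = Set.range u ∪ Set.range v := by
  apply Set.eq_of_subset_of_subset
  · rintro w ⟨i, rfl⟩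
    refine Fin.addCases (fun i' => ?_) (fun i' => ?_) i
    · rw [Fin.append_left]; exact Or.inl ⟨i', rfl⟩
    · rw [Fin.append_right]; exact Or.inr ⟨i', rfl⟩
  · rintro w (⟨i, rfl⟩ | ⟨i, rfl⟩)
    · exact ⟨Fin.castAdd k i, Fin.append_left u v i⟩
    · exact ⟨Fin.natAdd m i, Fin.append_right u v i⟩

lemma Jpat_shift (m a b : ℕ) : Jpat d (2*m+a) (2*m+b) = Jpat d a b := by
  unfold Jpat
  split_ifs <;> first | rfl | omega | (exfalso; omega)

lemma hFleft {α : Type*} {m k : ℕ} (u : Fin m → α) (v : Fin k → α) (i : Fin m)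
    (j : Fin (m + k)) (h : j.val = i.val) : Fin.append u v j = u i := by
  have hj : j = Fin.castAdd k i := Fin.ext (by simpa using h)
  rw [hj, Fin.append_left]

lemma hFright {α : Type*} {m k : ℕ} (u : Fin m → α) (v : Fin k → α) (i : Fin k)
    (j : Fin (m + k)) (h : j.val = m + i.val) : Fin.append u v j = v i := by
  have hj : j = Fin.natAdd m i := Fin.ext (by simpa using h)
  rw [hj, Fin.append_right]

end Append

section Forward
variable {p s n : ℕ}

lemma exists_isSystem (hp : p.Prime) (hs : 1 ≤ s)
    (M : Submodule (ZMod (p^s)) (Fin (2*n) → ZMod (p^s)))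
    (hM : M ⊓ symplOrth (p^s) n M = ⊥) :
    ∃ r x y, IsSystem (p^s) n r M x y := by
  obtain ⟨r, x, y, h1, h2, h3, h4, h5, h6⟩ :=
    exists_system hp hs (Nat.card M) M le_rfl hM
  exact ⟨r, x, y, ⟨h1, h2, h3, h4, h5, h6⟩⟩

lemma orth_inf_orth_orth (hp : p.Prime) (hs : 1 ≤ s)
    (M : Submodule (ZMod (p^s)) (Fin (2*n) → ZMod (p^s)))
    (hsup : M ⊔ symplOrth (p^s) n M = ⊤) :
    symplOrth (p^s) n M ⊓ symplOrth (p^s) n (symplOrth (p^s) n M) = ⊥ := by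
  rw [Submodule.eq_bot_iff]
  rintro z ⟨h1, h2⟩
  apply sympl_nondegenerate
  intro v
  have hker : (⊤ : Submodule (ZMod (p^s)) (Fin (2*n) → ZMod (p^s))) ≤
      LinearMap.ker (symplR (p^s) n z) := by
    rw [← hsup]
    apply sup_le
    · intro m hm
      simpa [LinearMap.mem_ker] using h1 m hm
    · intro w hw
      simpa [LinearMap.mem_ker] using h2 w hw
  simpa [LinearMap.mem_ker] using hker (Submodule.mem_top (x := v))

lemma forward_main (hp : p.Prime) (hs : 1 ≤ s)
    (M : Submodule (ZMod (p^s)) (Fin (2*n) → ZMod (p^s)))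
    (hM : M ⊓ symplOrth (p^s) n M = ⊥) :
    NearlySymplectic (p^s) n M ∧ M ⊔ symplOrth (p^s) n M = ⊤ := by
  haveI : NeZero (p^s) := ⟨pow_ne_zero s hp.pos.ne'⟩
  haveI : Fact (1 < p^s) := ⟨by
    calc 1 < p := hp.one_lt
    _ ≤ p^s := Nat.le_self_pow (by omega) p⟩
  obtain ⟨r1, x1, y1, S1⟩ := exists_isSystem hp hs M hM
  have hsup : M ⊔ symplOrth (p^s) n M = ⊤ := S1.sup_top
  refine ⟨?_, hsup⟩
  obtain ⟨r2, x2, y2, S2⟩ := exists_isSystem hp hs (symplOrth (p^s) n M)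
    (orth_inf_orth_orth hp hs M hsup)
  set b1 := ilv x1 y1 with hb1
  set b2 := ilv x2 y2 with hb2
  set F := Fin.append b1 b2 with hF
  -- linear independence of F
  have hFli : LinearIndependent (ZMod (p^s)) F := by
    rw [Fintype.linearIndependent_iff]
    intro g hg
    rw [Fin.sum_univ_add] at hg
    simp only [hF, Fin.append_left, Fin.append_right] at hg
    have hm1 : (∑ i : Fin (2*r1), g (Fin.castAdd (2*r2) i) • b1 i) ∈ M :=
      Submodule.sum_mem M (fun i _ => Submodule.smul_mem M _ (S1.ilv_mem i))
    have hm2 : (∑ i : Fin (2*r2), g (Fin.natAdd (2*r1) i) • b2 i) ∈ symplOrth (p^s) n M :=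
      Submodule.sum_mem _ (fun i _ => Submodule.smul_mem _ _ (S2.ilv_mem i))
    have he1 : (∑ i : Fin (2*r1), g (Fin.castAdd (2*r2) i) • b1 i) = 0 := by
      have : (∑ i : Fin (2*r1), g (Fin.castAdd (2*r2) i) • b1 i) ∈
          M ⊓ symplOrth (p^s) n M := by
        refine ⟨hm1, ?_⟩
        have : (∑ i : Fin (2*r1), g (Fin.castAdd (2*r2) i) • b1 i) =
            -(∑ i : Fin (2*r2), g (Fin.natAdd (2*r1) i) • b2 i) :=
          eq_neg_of_add_eq_zero_left hg
        rw [this]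
        exact Submodule.neg_mem _ hm2
      rw [hM] at this
      exact this
    have he2 : (∑ i : Fin (2*r2), g (Fin.natAdd (2*r1) i) • b2 i) = 0 := by
      rw [he1, zero_add] at hg
      exact hg
    have hz1 := Fintype.linearIndependent_iff.mp S1.ilv_li _ he1
    have hz2 := Fintype.linearIndependent_iff.mp S2.ilv_li _ he2
    intro k
    refine Fin.addCases (fun i => ?_) (fun i => ?_) k
    · exact hz1 i
    · exact hz2 i
  -- span of F is everything
  have hFspan : Submodule.span (ZMod (p^s)) (Set.range F) = ⊤ := by
    rw [hF, append_range, Submodule.span_union, hb1, hb2, S1.ilv_span, S2.ilv_span, hsup]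
  -- pairing values of F
  have hFpair : ∀ k l, sympl (p^s) n (F k) (F l) = Jpat (p^s) k.val l.val := by
    intro k l
    refine Fin.addCases (fun i => ?_) (fun i => ?_) k <;>
      refine Fin.addCases (fun j => ?_) (fun j => ?_) l
    · rw [hF, Fin.append_left, Fin.append_left, S1.sympl_ilv]
      rfl
    · rw [hF, Fin.append_left, Fin.append_right]
      have h0 : sympl (p^s) n (b1 i) (b2 j) = 0 := by
        rw [sympl_antisymm]
        rw [S2.ilv_mem j _ (S1.ilv_mem i), neg_zero]
      rw [h0, Fin.coe_castAdd, Fin.coe_natAdd, Jpat,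
        if_neg (by have := i.isLt; omega), if_neg (by have := i.isLt; omega)]
    · rw [hF, Fin.append_right, Fin.append_left]
      have h0 : sympl (p^s) n (b2 i) (b1 j) = 0 :=
        S2.ilv_mem i _ (S1.ilv_mem j)
      rw [h0, Fin.coe_castAdd, Fin.coe_natAdd, Jpat,
        if_neg (by have := j.isLt; omega), if_neg (by have := j.isLt; omega)]
    · rw [hF, Fin.append_right, Fin.append_right, S2.sympl_ilv, Fin.coe_natAdd,
        Fin.coe_natAdd, Jpat_shift]
  -- the basis
  have heq : 2*r1 + 2*r2 = 2*n := by
    have h1 := Module.finrank_eq_card_basis (Module.Basis.mk hFli (by rw [hFspan]))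
    rw [Module.finrank_pi, Fintype.card_fin, Fintype.card_fin] at h1
    omega
  set B := (Module.Basis.mk hFli (by rw [hFspan])).reindex (finCongr heq) with hB
  have hBapp : ∀ i : Fin (2*n), B i = F (Fin.cast heq.symm i) := by
    intro i
    rw [hB, Module.Basis.reindex_apply, Module.Basis.coe_mk]
    congr 1
  refine ⟨B, ?_, fun i => if i.val < 2*r1 then 1 else 0, ?_⟩
  · intro i j
    rw [hBapp, hBapp, hFpair, Jmat_eq_Jpat, Fin.coe_cast, Fin.coe_cast]
  · apply le_antisymm
    · rw [Submodule.span_le]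
      rintro v ⟨i, rfl⟩
      by_cases hi : i.val < 2*r1
      · simp only [if_pos hi, one_smul, SetLike.mem_coe]
        rw [hBapp, hF]
        rw [hFleft b1 b2 ⟨i.val, hi⟩ _ (by simp)]
        exact S1.ilv_mem _
      · simp only [if_neg hi, zero_smul, SetLike.mem_coe]
        exact Submodule.zero_mem M
    · conv_lhs => rw [← S1.ilv_span]
      rw [Submodule.span_le]
      rintro v ⟨t, rfl⟩
      have htlt : t.val < 2*n := by have := t.isLt; omega
      have hkey : ilv x1 y1 t = (if (⟨t.val, htlt⟩ : Fin (2*n)).val < 2*r1 then (1 : ZMod (p^s))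
          else 0) • B ⟨t.val, htlt⟩ := by
        rw [if_pos t.isLt, one_smul, hBapp, hF]
        rw [hFleft b1 b2 t _ (by simp)]
      rw [hkey]
      exact Submodule.subset_span ⟨⟨t.val, htlt⟩, rfl⟩

end Forward

section Backward
variable {d n : ℕ}

lemma sum_pair (f : Fin (2*n) → (Fin (2*n) → ZMod d))
    (hf : ∀ i j, sympl d n (f i) (f j) = Jmat d n i j)
    (a D : Fin (2*n) → ZMod d) (j : Fin (2*n)) :
    sympl d n (∑ k, a k • (D k • f k)) (f j) =
      a (pr j) * (D (pr j) * Jmat d n (pr j) j) := by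
  rw [sympl_sum_left, Finset.sum_eq_single (pr j)]
  · rw [sympl_smul_left, sympl_smul_left, hf]
  · intro b _ hb
    rw [sympl_smul_left, sympl_smul_left, hf, Jmat_eq_zero b j hb, mul_zero, mul_zero]
  · intro h; exact absurd (Finset.mem_univ _) h

lemma backward_main (f : Module.Basis (Fin (2*n)) (ZMod d) (Fin (2*n) → ZMod d))
    (hf : ∀ i j, sympl d n (f i) (f j) = Jmat d n i j) (D : Fin (2*n) → ZMod d)
    (M : Submodule (ZMod d) (Fin (2*n) → ZMod d))
    (hD : Submodule.span (ZMod d) (Set.range fun i => D i • f i) = M)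
    (hsup : M ⊔ symplOrth d n M = ⊤) : M ⊓ symplOrth d n M = ⊥ := by
  have hgen : ∀ t, D t • f t ∈ M := fun t => hD ▸ Submodule.subset_span ⟨t, rfl⟩
  have hstar : ∀ j, ∃ b, D (pr j) = b * (D j * D (pr j)) := by
    intro j
    have hfj : f j ∈ M ⊔ symplOrth d n M := by rw [hsup]; trivial
    obtain ⟨m, hm, w, hw, hmw⟩ := Submodule.mem_sup.mp hfj
    rw [← hD] at hm
    obtain ⟨a, ha⟩ := (Submodule.mem_span_range_iff_exists_fun _).mp hm
    have hworth : sympl d n w (f (pr j)) * D (pr j) = 0 := by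
      have h1 := hw (D (pr j) • f (pr j)) (hgen (pr j))
      rw [sympl_smul_right] at h1
      rw [mul_comm]
      exact h1
    have hwv : w = f j - m := by
      rw [← hmw]; ring
    rw [hwv, sympl_sub_left, ← ha, sum_pair f hf a D, pr_pr, hf] at hworth
    set E := Jmat d n j (pr j) with hEdef
    have hE : E * E = 1 := by
      have := Jmat_pr_sq (d := d) (n := n) (pr j)
      rwa [pr_pr] at this
    refine ⟨a j, ?_⟩
    linear_combination E * hworth - (D (pr j) - a j * (D j * D (pr j))) * hE
  rw [Submodule.eq_bot_iff]
  rintro z ⟨hzM, hzO⟩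
  rw [← hD] at hzM
  obtain ⟨a, ha⟩ := (Submodule.mem_span_range_iff_exists_fun _).mp hzM
  have hann : ∀ i, D (pr i) * D i * a i = 0 := by
    intro i
    have h1 := hzO (D (pr i) • f (pr i)) (hgen (pr i))
    rw [sympl_smul_right, ← ha, sum_pair f hf a D, pr_pr] at h1
    set E := Jmat d n i (pr i) with hEdef
    have hE : E * E = 1 := by
      have := Jmat_pr_sq (d := d) (n := n) (pr i)
      rwa [pr_pr] at this
    linear_combination E * h1 - (D (pr i) * D i * a i) * hE
  rw [← ha]
  apply Finset.sum_eq_zero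
  intro i _
  obtain ⟨b, hb⟩ := hstar (pr i)
  rw [pr_pr] at hb
  have hDi : a i * D i = 0 := by
    linear_combination a i * hb + b * hann i
  rw [smul_smul, hDi, zero_smul]

end Backward

/-- For `d = p^s`, a submodule `M` of `(ℤ/dℤ)^{2n}` is symplectic iff it is nearly
symplectic and `M + M^ω = (ℤ/dℤ)^{2n}`; in that case `M` is free of even rank. -/
theorem stmt_18 (p s n : ℕ) (hp : p.Prime) (hs : 1 ≤ s) (hn : 1 ≤ n)
    (M : Submodule (ZMod (p ^ s)) (Fin (2 * n) → ZMod (p ^ s))) :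
    (M ⊓ symplOrth (p ^ s) n M = ⊥ ↔
      NearlySymplectic (p ^ s) n M ∧ M ⊔ symplOrth (p ^ s) n M = ⊤) ∧
    (M ⊓ symplOrth (p ^ s) n M = ⊥ →
      ∃ (r : ℕ) (b : Fin (2 * r) → (Fin (2 * n) → ZMod (p ^ s))),
        LinearIndependent (ZMod (p ^ s)) b ∧
        Submodule.span (ZMod (p ^ s)) (Set.range b) = M) := by
  constructor
  · constructor
    · intro h
      exact forward_main hp hs M h
    · rintro ⟨⟨f, hf, D, hD⟩, hsup⟩
      exact backward_main f hf D M hD hsup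
  · intro h
    obtain ⟨r, x, y, S⟩ := exists_isSystem hp hs M h
    exact ⟨r, ilv x y, S.ilv_li, S.ilv_span⟩
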